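/- Let 0 < r < q < 1 and δ = q − r. Then √((1−q)(1−r)) + √(q r) ≤ √(1 − δ²); consequently −2 log( √((1−q)(1−r)) + √(q r) ) ≥ −log(1 − δ²) ≥ δ² = (q − r)². -/
import Mathlib


/-- Let 0 < r < q < 1 and δ = q − r. Then
`√((1−q)(1−r)) + √(qr) ≤ √(1 − δ²)`; consequently
`−2 log(√((1−q)(1−r)) + √(qr)) ≥ −log(1 − δ²) ≥ δ² = (q−r)²`. -/
theorem stmt_10 (q r δ : ℝ) (hr0 : 0 < r) (hrq : r < q) (hq1 : q < 1) (hδ : δ = q - r) :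
    Real.sqrt ((1 - q) * (1 - r)) + Real.sqrt (q * r) ≤ Real.sqrt (1 - δ ^ 2) ∧
    -Real.log (1 - δ ^ 2) ≤
      -2 * Real.log (Real.sqrt ((1 - q) * (1 - r)) + Real.sqrt (q * r)) ∧
    δ ^ 2 ≤ -Real.log (1 - δ ^ 2) ∧ δ ^ 2 = (q - r) ^ 2 := by
  subst hδ
  have hq0 : 0 < q := hr0.trans hrq
  have hr1 : r < 1 := hrq.trans hq1
  set s1 := Real.sqrt ((1 - q) * (1 - r)) with hs1
  set s2 := Real.sqrt (q * r) with hs2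
  set s3 := Real.sqrt (1 - (q - r) ^ 2) with hs3
  have h1nn : (0:ℝ) ≤ (1 - q) * (1 - r) := by nlinarith
  have h2pos : (0:ℝ) < q * r := by positivity
  have h3pos : (0:ℝ) < 1 - (q - r) ^ 2 := by nlinarith
  have hs1sq : s1 ^ 2 = (1 - q) * (1 - r) := Real.sq_sqrt h1nn
  have hs2sq : s2 ^ 2 = q * r := Real.sq_sqrt h2pos.le
  have hs3sq : s3 ^ 2 = 1 - (q - r) ^ 2 := Real.sq_sqrt h3pos.le
  have hs1nn : 0 ≤ s1 := Real.sqrt_nonneg _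
  have hs2pos : 0 < s2 := Real.sqrt_pos.mpr h2pos
  have hs3nn : 0 ≤ s3 := Real.sqrt_nonneg _
  have hprodeq : s1 * s2 = Real.sqrt ((q * (1 - q)) * (r * (1 - r))) := by
    rw [hs1, hs2, ← Real.sqrt_mul h1nn]
    ring_nf
  have hab : 2 * (s1 * s2) ≤ q * (1 - q) + r * (1 - r) := by
    have h : (q * (1 - q)) * (r * (1 - r)) ≤ ((q * (1 - q) + r * (1 - r)) / 2) ^ 2 := by
      nlinarith [sq_nonneg (q * (1 - q) - r * (1 - r))]
    have h2 : s1 * s2 ≤ (q * (1 - q) + r * (1 - r)) / 2 := by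
      rw [hprodeq]
      calc Real.sqrt ((q * (1 - q)) * (r * (1 - r)))
          ≤ Real.sqrt (((q * (1 - q) + r * (1 - r)) / 2) ^ 2) := Real.sqrt_le_sqrt h
        _ = (q * (1 - q) + r * (1 - r)) / 2 := Real.sqrt_sq (by nlinarith)
    linarith
  have key : s1 + s2 ≤ s3 := by
    rw [hs3, show (1 : ℝ) - (q - r) ^ 2 = ((1:ℝ) - (q-r)^2) from rfl]
    rw [← Real.sqrt_sq (by positivity : (0:ℝ) ≤ s1 + s2)]
    apply Real.sqrt_le_sqrt
    nlinarith
  refine ⟨key, ?_, ?_, rfl⟩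
  · have hspos : 0 < s1 + s2 := by linarith
    have h2log : (2:ℝ) * Real.log (s1 + s2) = Real.log ((s1 + s2) ^ 2) := by
      rw [Real.log_pow]; push_cast; ring
    have hsq : (s1 + s2) ^ 2 ≤ 1 - (q - r) ^ 2 := by
      nlinarith [mul_le_mul key key (by linarith) hs3nn]
    have := Real.log_le_log (by positivity) hsq
    linarith [h2log ▸ this]
  · have := Real.log_le_sub_one_of_pos h3pos
    nlinarith
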